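/- Let n ≥ 2 and let p₁ ≥ p₂ ≥ … ≥ p_s ≥ 1 be integers with p₁ + … + p_s = n and |p_i − p_j| ≤ 1 for all i,j. Let e ∈ sl(n,ℂ) be the block-diagonal nilpotent matrix whose diagonal blocks are the nilpotent Jordan blocks of sizes p₁,…,p_s (ones on the superdiagonal of each block, zeros elsewhere). Then there exists a Lie subalgebra 𝔰 of sl(n,ℂ) such that sl(n,ℂ) = 𝔤^e ⊕ 𝔰 as vector spaces, where 𝔤^e = {x ∈ sl(n,ℂ) : x·e − e·x = 0} is the centralizer of e. (In other words, the nilpotent adjoint orbit of partition (p₁,…,p_s) is conormal.) -/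

import Mathlib

open Module

/-- The submodule sl(n,ℂ) of traceless matrices. -/
noncomputable def slSubmodule (n : ℕ) : Submodule ℂ (Matrix (Fin n) (Fin n) ℂ) :=
  LinearMap.ker (Matrix.traceLinearMap (Fin n) ℂ ℂ)

/-- The submodule of matrices commuting with a given matrix e. -/
noncomputable def commSubmodule {n : ℕ} (e : Matrix (Fin n) (Fin n) ℂ) :
    Submodule ℂ (Matrix (Fin n) (Fin n) ℂ) :=
  LinearMap.ker (LinearMap.mulLeft ℂ e - LinearMap.mulRight ℂ e)

/-- The block-diagonal nilpotent matrix with nilpotent Jordan blocks of sizes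
p 0 ≥ p 1 ≥ … ≥ p (s-1): the entry (i, i+1) is 1 unless i+1 is one of the partial sums
of the block sizes, all other entries are 0. -/
noncomputable def jordanOfPartition {n : ℕ} (s : ℕ) (p : Fin s → ℕ) :
    Matrix (Fin n) (Fin n) ℂ :=
  fun i j => if ((j : ℕ) = (i : ℕ) + 1 ∧
      ∀ t : Fin s, (j : ℕ) ≠ ∑ u ∈ Finset.univ.filter (fun u : Fin s => (u : ℕ) < (t : ℕ)), p u)
    then 1 else 0

open Finset

namespace Conormal


variable {s : ℕ} (p : Fin s → ℕ)

/-- Partial sums of block sizes. -/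
def offN (b : ℕ) : ℕ := ∑ u ∈ Finset.univ.filter (fun u : Fin s => (u : ℕ) < b), p u

lemma offN_mono {b b' : ℕ} (h : b ≤ b') : offN p b ≤ offN p b' := by
  apply Finset.sum_le_sum_of_subset
  intro u hu
  simp only [Finset.mem_filter, Finset.mem_univ, true_and] at hu ⊢
  omega

lemma offN_succ {b : ℕ} (hb : b < s) : offN p (b + 1) = offN p b + p ⟨b, hb⟩ := by
  unfold offN
  have : Finset.univ.filter (fun u : Fin s => (u : ℕ) < b + 1)
      = insert ⟨b, hb⟩ (Finset.univ.filter (fun u : Fin s => (u : ℕ) < b)) := by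
    ext u
    simp only [Finset.mem_filter, Finset.mem_univ, true_and, Finset.mem_insert, Fin.ext_iff]
    omega
  rw [this, Finset.sum_insert (by simp)]
  ring

lemma offN_top : offN p s = ∑ u, p u := by
  unfold offN
  congr 1
  apply Finset.filter_true_of_mem
  intro u _
  exact u.isLt

lemma offN_block_le {b c : ℕ} (hb : b < s) (hbc : b < c) (hc : c ≤ s) :
    offN p b + p ⟨b, hb⟩ ≤ offN p c := by
  rw [← offN_succ p hb]
  exact offN_mono p hbc

section GlobalIndex

variable {n : ℕ} (hpos : ∀ i, 1 ≤ p i) (hsum : ∑ u, p u = n)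

/-- global index of (block, position). -/
def toGlobal : (Σ b : Fin s, Fin (p b)) → Fin n := fun I =>
  ⟨offN p I.1 + I.2, by
    have h1 : offN p I.1 + (I.2 : ℕ) < offN p I.1 + p I.1 := by
      have := I.2.isLt; omega
    have h2 : offN p ((I.1 : ℕ) + 1) ≤ offN p s := offN_mono p I.1.isLt
    rw [offN_succ p I.1.isLt] at h2
    rw [offN_top p, hsum] at h2
    simp only [Fin.eta] at h2
    omega⟩

lemma toGlobal_inj : Function.Injective (toGlobal p hsum) := by
  rintro ⟨b, i⟩ ⟨c, j⟩ h
  have hv : offN p b + (i : ℕ) = offN p c + (j : ℕ) := congrArg Fin.val h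
  rcases lt_trichotomy (b : ℕ) (c : ℕ) with hlt | heq | hgt
  · exfalso
    have h1 : offN p b + p ⟨b, b.isLt⟩ ≤ offN p c := offN_block_le p b.isLt hlt c.isLt.le
    have := i.isLt
    simp only [Fin.eta] at h1
    omega
  · have hbc : b = c := Fin.ext heq
    subst hbc
    have : (i : ℕ) = (j : ℕ) := by omega
    simp only [Sigma.mk.inj_iff, heq_eq_eq, true_and]
    exact Fin.ext this
  · exfalso
    have h1 : offN p c + p ⟨c, c.isLt⟩ ≤ offN p b := offN_block_le p c.isLt hgt b.isLt.le
    have := j.isLt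
    simp only [Fin.eta] at h1
    omega

/-- The equivalence between sigma indices and Fin n. -/
noncomputable def ixEquiv : (Σ b : Fin s, Fin (p b)) ≃ Fin n :=
  Equiv.ofBijective (toGlobal p hsum)
    ((Fintype.bijective_iff_injective_and_card _).mpr ⟨toGlobal_inj p hsum,
      by simp [Fintype.card_sigma, hsum]⟩)

lemma ixEquiv_val (I : Σ b : Fin s, Fin (p b)) :
    ((ixEquiv p hsum I : Fin n) : ℕ) = offN p I.1 + I.2 := rfl

/-- interior positions are not block starts -/
lemma not_block_start (b : Fin s) {j : ℕ} (h1 : 1 ≤ j) (h2 : j < p b) (t : Fin s) :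
    offN p (b : ℕ) + j ≠ offN p (t : ℕ) := by
  rcases le_or_gt (t : ℕ) (b : ℕ) with hle | hgt
  · have := offN_mono p hle
    omega
  · have h3 : offN p b + p ⟨(b : ℕ), b.isLt⟩ ≤ offN p t := offN_block_le p b.isLt hgt t.isLt.le
    simp only [Fin.eta] at h3
    omega




end GlobalIndex

/-- The Jordan matrix in sigma coordinates. -/
def eSig : Matrix (Σ b : Fin s, Fin (p b)) (Σ b : Fin s, Fin (p b)) ℂ :=
  fun I J => if I.1 = J.1 ∧ (J.2 : ℕ) = (I.2 : ℕ) + 1 then 1 else 0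

lemma mul_eSig_zero (x : Matrix (Σ b : Fin s, Fin (p b)) (Σ b : Fin s, Fin (p b)) ℂ)
    (I : Σ b : Fin s, Fin (p b)) (c : Fin s) (hc : 0 < p c) :
    (x * eSig p) I ⟨c, ⟨0, hc⟩⟩ = 0 := by
  rw [Matrix.mul_apply]
  apply Finset.sum_eq_zero
  intro K _
  have : eSig p K ⟨c, ⟨0, hc⟩⟩ = 0 := by
    unfold eSig
    rw [if_neg]
    rintro ⟨-, h2⟩
    simp at h2
  rw [this, mul_zero]

lemma mul_eSig_succ (x : Matrix (Σ b : Fin s, Fin (p b)) (Σ b : Fin s, Fin (p b)) ℂ)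
    (I : Σ b : Fin s, Fin (p b)) (c : Fin s) (j : ℕ) (hj : j + 1 < p c) :
    (x * eSig p) I ⟨c, ⟨j + 1, hj⟩⟩ = x I ⟨c, ⟨j, by omega⟩⟩ := by
  rw [Matrix.mul_apply]
  rw [Finset.sum_eq_single (⟨c, ⟨j, by omega⟩⟩ : Σ b : Fin s, Fin (p b))]
  · have : eSig p ⟨c, ⟨j, by omega⟩⟩ ⟨c, ⟨j + 1, hj⟩⟩ = 1 := by
      unfold eSig; rw [if_pos]; exact ⟨rfl, rfl⟩
    rw [this, mul_one]
  · rintro ⟨d, ⟨k, hk⟩⟩ - hne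
    have : eSig p ⟨d, ⟨k, hk⟩⟩ ⟨c, ⟨j + 1, hj⟩⟩ = 0 := by
      unfold eSig
      rw [if_neg]
      rintro ⟨h1, h2⟩
      apply hne
      subst h1
      simp only [Fin.val_mk] at h2
      simp only [Sigma.mk.inj_iff, heq_eq_eq, true_and]
      refine Fin.ext ?_
      simp only [Fin.val_mk]
      omega
    rw [this, mul_zero]
  · intro h
    exact absurd (Finset.mem_univ _) h

lemma eSig_mul_succ (x : Matrix (Σ b : Fin s, Fin (p b)) (Σ b : Fin s, Fin (p b)) ℂ)
    (b : Fin s) (i : ℕ) (hi0 : i < p b) (hi : i + 1 < p b) (J : Σ b : Fin s, Fin (p b)) :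
    (eSig p * x) ⟨b, ⟨i, hi0⟩⟩ J = x ⟨b, ⟨i + 1, hi⟩⟩ J := by
  rw [Matrix.mul_apply]
  rw [Finset.sum_eq_single (⟨b, ⟨i + 1, hi⟩⟩ : Σ b : Fin s, Fin (p b))]
  · have : eSig p ⟨b, ⟨i, hi0⟩⟩ ⟨b, ⟨i + 1, hi⟩⟩ = 1 := by
      unfold eSig; rw [if_pos]; exact ⟨rfl, rfl⟩
    rw [this, one_mul]
  · rintro ⟨d, ⟨k, hk⟩⟩ - hne
    have : eSig p ⟨b, ⟨i, hi0⟩⟩ ⟨d, ⟨k, hk⟩⟩ = 0 := by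
      unfold eSig
      rw [if_neg]
      rintro ⟨h1, h2⟩
      apply hne
      subst h1
      simp only [Fin.val_mk] at h2
      simp only [Sigma.mk.inj_iff, heq_eq_eq, true_and]
      refine Fin.ext ?_
      simp only [Fin.val_mk]
      omega
    rw [this, zero_mul]
  · intro h
    exact absurd (Finset.mem_univ _) h

lemma eSig_mul_top (x : Matrix (Σ b : Fin s, Fin (p b)) (Σ b : Fin s, Fin (p b)) ℂ)
    (b : Fin s) (i : ℕ) (hi0 : i < p b) (hi : ¬ (i + 1 < p b)) (J : Σ b : Fin s, Fin (p b)) :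
    (eSig p * x) ⟨b, ⟨i, hi0⟩⟩ J = 0 := by
  rw [Matrix.mul_apply]
  apply Finset.sum_eq_zero
  rintro ⟨d, ⟨k, hk⟩⟩ -
  have : eSig p ⟨b, ⟨i, hi0⟩⟩ ⟨d, ⟨k, hk⟩⟩ = 0 := by
    unfold eSig
    rw [if_neg]
    rintro ⟨h1, h2⟩
    simp only at h1 h2
    subst h1
    omega
  rw [this, zero_mul]

section Comm

variable {p} {x : Matrix (Σ b : Fin s, Fin (p b)) (Σ b : Fin s, Fin (p b)) ℂ}
  (hx : x * eSig p = eSig p * x)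

include hx

lemma comm_B1 (b c : Fin s) (i j : ℕ) (hi0 : i < p b) (h1 : i ≠ 0) (hj : j < p c)
    (hj0 : j = 0) : x ⟨b, ⟨i, hi0⟩⟩ ⟨c, ⟨j, hj⟩⟩ = 0 := by
  subst hj0
  obtain ⟨i', rfl⟩ : ∃ i', i = i' + 1 := ⟨i - 1, by omega⟩
  have h := congrFun (congrFun hx ⟨b, ⟨i', by omega⟩⟩) ⟨c, ⟨0, hj⟩⟩
  rw [mul_eSig_zero, eSig_mul_succ p x b i' (by omega) hi0] at h
  exact h.symm

lemma comm_B2 (b c : Fin s) (i j : ℕ) (hi0 : i < p b) (hi : ¬ (i + 1 < p b))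
    (hj : j < p c) (hj1 : j + 1 < p c) : x ⟨b, ⟨i, hi0⟩⟩ ⟨c, ⟨j, hj⟩⟩ = 0 := by
  have h := congrFun (congrFun hx ⟨b, ⟨i, hi0⟩⟩) ⟨c, ⟨j + 1, hj1⟩⟩
  rw [mul_eSig_succ p x _ c j hj1, eSig_mul_top p x b i hi0 hi] at h
  exact h

lemma comm_R (b c : Fin s) (i j : ℕ) (hi : i + 1 < p b) (hj : j + 1 < p c) :
    x ⟨b, ⟨i, by omega⟩⟩ ⟨c, ⟨j, by omega⟩⟩ = x ⟨b, ⟨i + 1, hi⟩⟩ ⟨c, ⟨j + 1, hj⟩⟩ := by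
  have h := congrFun (congrFun hx ⟨b, ⟨i, by omega⟩⟩) ⟨c, ⟨j + 1, hj⟩⟩
  rw [mul_eSig_succ p x _ c j hj, eSig_mul_succ p x b i (by omega) hi] at h
  exact h

lemma comm_chain (b c : Fin s) (i j d : ℕ) (hi : i + d < p b) (hj : j + d < p c) :
    x ⟨b, ⟨i, by omega⟩⟩ ⟨c, ⟨j, by omega⟩⟩ = x ⟨b, ⟨i + d, hi⟩⟩ ⟨c, ⟨j + d, hj⟩⟩ := by
  induction d with
  | zero => rfl
  | succ d ih =>
    have h1 : i + d < p b := by omega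
    have h2 : j + d < p c := by omega
    rw [ih h1 h2]
    have := comm_R hx b c (i + d) (j + d) (by omega) (by omega)
    convert this using 3 <;> simp only [Fin.mk.injEq] <;> omega

end Comm





/-- Support predicate for the complement. -/
def PP (I J : Σ b : Fin s, Fin (p b)) : Prop :=
  0 < (I.2 : ℕ) ∨ ((J.2 : ℕ) = 0 ∧ (p I.1 < p J.1 ∨ ((I.1 : ℕ) = 0 ∧ (J.1 : ℕ) = 0)))

noncomputable def zeroSet : Submodule ℂ (Matrix (Σ b : Fin s, Fin (p b)) (Σ b : Fin s, Fin (p b)) ℂ) where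
  carrier := {x | ∀ I J, ¬ PP p I J → x I J = 0}
  add_mem' := by
    intro x y hx hy I J h
    simp only [Matrix.add_apply, hx I J h, hy I J h, add_zero]
  zero_mem' := by intro I J h; rfl
  smul_mem' := by
    intro c x hx I J h
    simp only [Matrix.smul_apply, hx I J h, smul_zero]

noncomputable def slSig : Submodule ℂ (Matrix (Σ b : Fin s, Fin (p b)) (Σ b : Fin s, Fin (p b)) ℂ) :=
  LinearMap.ker (Matrix.traceLinearMap (Σ b : Fin s, Fin (p b)) ℂ ℂ)

noncomputable def commSig : Submodule ℂ (Matrix (Σ b : Fin s, Fin (p b)) (Σ b : Fin s, Fin (p b)) ℂ) where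
  carrier := {x | x * eSig p = eSig p * x}
  add_mem' := by
    intro x y hx hy
    simp only [Set.mem_setOf_eq] at *
    rw [add_mul, mul_add, hx, hy]
  zero_mem' := by simp
  smul_mem' := by
    intro c x hx
    simp only [Set.mem_setOf_eq] at *
    rw [smul_mul_assoc, mul_smul_comm, hx]

noncomputable def geSig : Submodule ℂ (Matrix (Σ b : Fin s, Fin (p b)) (Σ b : Fin s, Fin (p b)) ℂ) :=
  slSig p ⊓ commSig p

noncomputable def sSig : Submodule ℂ (Matrix (Σ b : Fin s, Fin (p b)) (Σ b : Fin s, Fin (p b)) ℂ) :=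
  slSig p ⊓ zeroSet p

variable {p}

lemma PP_trans (hmono : ∀ i j : Fin s, i ≤ j → p j ≤ p i)
    {I K J : Σ b : Fin s, Fin (p b)} (h1 : PP p I K) (h2 : PP p K J) : PP p I J := by
  rcases h1 with h1 | ⟨hK2, h1⟩
  · exact Or.inl h1
  · rcases h2 with h2 | ⟨hJ2, h2⟩
    · omega
    · right
      refine ⟨hJ2, ?_⟩
      rcases h1 with h1 | ⟨hI1, hK1⟩
      · rcases h2 with h2 | ⟨hK1, hJ1⟩
        · exact Or.inl (by omega)
        · left
          have : K.1 = J.1 := Fin.ext (by omega)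
          rw [← this]
          exact h1
      · rcases h2 with h2 | ⟨-, hJ1⟩
        · exfalso
          have : p J.1 ≤ p K.1 := hmono K.1 J.1 (by rw [Fin.le_def]; omega)
          omega
        · exact Or.inr ⟨hI1, hJ1⟩

lemma zeroSet_mul (hmono : ∀ i j : Fin s, i ≤ j → p j ≤ p i)
    {x y : Matrix (Σ b : Fin s, Fin (p b)) (Σ b : Fin s, Fin (p b)) ℂ}
    (hx : x ∈ zeroSet p) (hy : y ∈ zeroSet p) : x * y ∈ zeroSet p := by
  intro I J h
  rw [Matrix.mul_apply]
  apply Finset.sum_eq_zero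
  intro K _
  by_cases hPK : PP p I K
  · have : ¬ PP p K J := fun h2 => h (PP_trans hmono hPK h2)
    rw [hy K J this, mul_zero]
  · rw [hx I K hPK, zero_mul]



section Core

lemma trace_block0 (hs : 0 < s) (v : ℂ)
    (y : Matrix (Σ b : Fin s, Fin (p b)) (Σ b : Fin s, Fin (p b)) ℂ)
    (h : ∀ (b : Fin s) (i : Fin (p b)), y ⟨b, i⟩ ⟨b, i⟩ = if b = ⟨0, hs⟩ then v else 0) :
    Matrix.trace y = (p ⟨0, hs⟩ : ℂ) * v := by
  have h1 : Matrix.trace y = ∑ b : Fin s, ∑ i : Fin (p b), y ⟨b, i⟩ ⟨b, i⟩ := by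
    rw [Matrix.trace]
    rw [← Finset.univ_sigma_univ, Finset.sum_sigma]
    rfl
  rw [h1]
  have h2 : ∀ b : Fin s, ∑ i : Fin (p b), y ⟨b, i⟩ ⟨b, i⟩
      = if b = ⟨0, hs⟩ then (p b : ℂ) * v else 0 := by
    intro b
    by_cases hb : b = ⟨0, hs⟩
    · rw [if_pos hb]
      rw [Finset.sum_congr rfl (fun i _ => by rw [h b i, if_pos hb])]
      simp [Finset.sum_const, Finset.card_univ, nsmul_eq_mul]
    · rw [if_neg hb]
      rw [Finset.sum_congr rfl (fun i _ => by rw [h b i, if_neg hb])]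
      simp
  rw [Finset.sum_congr rfl (fun b _ => h2 b)]
  rw [Finset.sum_ite_eq' Finset.univ (⟨0, hs⟩ : Fin s) (fun b => (p b : ℂ) * v)]
  simp

lemma inf_eq_zero (hs : 0 < s) (hpos : ∀ i, 1 ≤ p i)
    {x : Matrix (Σ b : Fin s, Fin (p b)) (Σ b : Fin s, Fin (p b)) ℂ}
    (htr : Matrix.trace x = 0) (hx : x * eSig p = eSig p * x)
    (hz : ∀ I J, ¬ PP p I J → x I J = 0) : x = 0 := by
  set b0 : Fin s := ⟨0, hs⟩ with hb0
  set t : ℂ := x ⟨b0, ⟨0, hpos b0⟩⟩ ⟨b0, ⟨0, hpos b0⟩⟩ with ht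
  have main : ∀ (i : ℕ) (b c : Fin s) (hi : i < p b) (j : ℕ) (hj : j < p c),
      x ⟨b, ⟨i, hi⟩⟩ ⟨c, ⟨j, hj⟩⟩ = if (b : ℕ) = 0 ∧ (c : ℕ) = 0 ∧ i = j then t else 0 := by
    intro i
    induction i with
    | zero =>
      intro b c hi j hj
      rcases Nat.eq_zero_or_pos j with rfl | hjpos
      · by_cases hbc : (b : ℕ) = 0 ∧ (c : ℕ) = 0
        · rw [if_pos ⟨hbc.1, hbc.2, rfl⟩]
          have hb : b = b0 := Fin.ext hbc.1
          have hc : c = b0 := Fin.ext hbc.2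
          subst hb
          subst hc
          rfl
        · rw [if_neg (by tauto)]
          rcases le_or_gt (p c) (p b) with hle | hlt
          · apply hz
            intro hPP
            simp only [PP, Fin.val_mk] at hPP
            rcases hPP with h | ⟨-, h | h⟩
            · omega
            · omega
            · exact hbc h
          · have hd : 0 + (p b - 1) < p b := by have := hpos b; omega
            have hd2 : 0 + (p b - 1) < p c := by omega
            rw [comm_chain hx b c 0 0 (p b - 1) hd hd2]
            exact comm_B2 hx b c _ _ hd (by omega) hd2 (by omega)
      · rw [if_neg (by omega)]
        apply hz
        intro hPP
        simp only [PP, Fin.val_mk] at hPP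
        rcases hPP with h | ⟨h0, -⟩ <;> omega
    | succ i ih =>
      intro b c hi j hj
      rcases Nat.eq_zero_or_pos j with rfl | hjpos
      · rw [if_neg (by omega)]
        exact comm_B1 hx b c (i + 1) 0 hi (by omega) hj rfl
      · obtain ⟨j', rfl⟩ : ∃ j', j = j' + 1 := ⟨j - 1, by omega⟩
        rw [← comm_R hx b c i j' hi hj]
        rw [ih b c (by omega) j' (by omega)]
        by_cases h : (b : ℕ) = 0 ∧ (c : ℕ) = 0 ∧ i = j'
        · rw [if_pos h, if_pos ⟨h.1, h.2.1, by omega⟩]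
        · rw [if_neg h, if_neg (fun hh => h ⟨hh.1, hh.2.1, by omega⟩)]
  have htr2 : Matrix.trace x = (p b0 : ℂ) * t := by
    apply trace_block0 hs
    rintro b ⟨i, hi⟩
    rw [main i b b hi i hi]
    by_cases hb : b = b0
    · rw [if_pos (by subst hb; exact ⟨rfl, rfl, rfl⟩), if_pos hb]
    · rw [if_neg, if_neg hb]
      rintro ⟨h1, -, -⟩
      exact hb (Fin.ext h1)
  have hpt : (p b0 : ℂ) ≠ 0 := by
    have := hpos b0
    exact_mod_cast Nat.cast_ne_zero.mpr (by omega)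
  have ht0 : t = 0 := by
    rw [htr2] at htr
    exact (mul_eq_zero.mp htr).resolve_left hpt
  funext I J
  rcases I with ⟨b, ⟨i, hi⟩⟩
  rcases J with ⟨c, ⟨j, hj⟩⟩
  rw [main i b c hi j hj, ht0]
  simp

end Core

section Sup

variable (p)

/-- The centralizer element matching x on the free coordinates. -/
noncomputable def cMat (hpos : ∀ i, 1 ≤ p i)
    (x : Matrix (Σ b : Fin s, Fin (p b)) (Σ b : Fin s, Fin (p b)) ℂ) :
    Matrix (Σ b : Fin s, Fin (p b)) (Σ b : Fin s, Fin (p b)) ℂ :=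
  fun I J => if (I.2 : ℕ) ≤ (J.2 : ℕ) ∧ (p J.1 ≤ p I.1 ∨ (I.2 : ℕ) < (J.2 : ℕ))
    then x ⟨I.1, ⟨0, hpos I.1⟩⟩ ⟨J.1, ⟨(J.2 : ℕ) - (I.2 : ℕ),
      Nat.lt_of_le_of_lt (Nat.sub_le _ _) J.2.isLt⟩⟩ else 0

/-- Identity on block 0. -/
noncomputable def E0 : Matrix (Σ b : Fin s, Fin (p b)) (Σ b : Fin s, Fin (p b)) ℂ :=
  fun I J => if (I.1 : ℕ) = 0 ∧ (J.1 : ℕ) = 0 ∧ (I.2 : ℕ) = (J.2 : ℕ) then 1 else 0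

variable {p}

lemma cMat_comm (hpos : ∀ i, 1 ≤ p i) (hbal : ∀ i j : Fin s, p i ≤ p j + 1)
    (x : Matrix (Σ b : Fin s, Fin (p b)) (Σ b : Fin s, Fin (p b)) ℂ) :
    cMat p hpos x * eSig p = eSig p * cMat p hpos x := by
  funext I J
  rcases I with ⟨b, ⟨i, hi⟩⟩
  rcases J with ⟨c, ⟨j, hj⟩⟩
  rcases Nat.eq_zero_or_pos j with rfl | hjpos
  · rw [mul_eSig_zero]
    by_cases hib : i + 1 < p b
    · rw [eSig_mul_succ p _ b i hi hib]
      rw [cMat]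
      rw [if_neg (by simp)]
    · rw [eSig_mul_top p _ b i hi hib]
  · obtain ⟨j', rfl⟩ : ∃ j', j = j' + 1 := ⟨j - 1, by omega⟩
    rw [mul_eSig_succ p _ _ c j' hj]
    by_cases hib : i + 1 < p b
    · rw [eSig_mul_succ p _ b i hi hib]
      rw [cMat, cMat]
      simp only [Fin.val_mk]
      by_cases h : i ≤ j' ∧ (p c ≤ p b ∨ i < j')
      · rw [if_pos h, if_pos (by omega)]
        simp only [Nat.succ_sub_succ]
      · rw [if_neg h, if_neg (by omega)]
    · rw [eSig_mul_top p _ b i hi hib]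
      rw [cMat]
      simp only [Fin.val_mk]
      rw [if_neg]
      intro h
      have hb2 := hbal c b
      omega

lemma E0_comm : E0 p * eSig p = eSig p * E0 p := by
  funext I J
  rcases I with ⟨b, ⟨i, hi⟩⟩
  rcases J with ⟨c, ⟨j, hj⟩⟩
  rcases Nat.eq_zero_or_pos j with rfl | hjpos
  · rw [mul_eSig_zero]
    by_cases hib : i + 1 < p b
    · rw [eSig_mul_succ p _ b i hi hib]
      rw [E0]
      rw [if_neg (by simp)]
    · rw [eSig_mul_top p _ b i hi hib]
  · obtain ⟨j', rfl⟩ : ∃ j', j = j' + 1 := ⟨j - 1, by omega⟩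
    rw [mul_eSig_succ p _ _ c j' hj]
    by_cases hib : i + 1 < p b
    · rw [eSig_mul_succ p _ b i hi hib]
      rw [E0, E0]
      simp only [Fin.val_mk]
      by_cases h : (b : ℕ) = 0 ∧ (c : ℕ) = 0 ∧ i = j'
      · rw [if_pos h, if_pos ⟨h.1, h.2.1, by omega⟩]
      · rw [if_neg h, if_neg (fun hh => h ⟨hh.1, hh.2.1, by omega⟩)]
    · rw [eSig_mul_top p _ b i hi hib]
      rw [E0]
      simp only [Fin.val_mk]
      rw [if_neg]
      rintro ⟨h1, h2, h3⟩
      have : b = c := Fin.ext (by omega)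
      subst this
      omega

lemma E0_trace (hs : 0 < s) : Matrix.trace (E0 p) = (p ⟨0, hs⟩ : ℂ) := by
  have := trace_block0 hs 1 (E0 p) (fun b i => by
    rw [E0]
    by_cases hb : b = ⟨0, hs⟩
    · rw [if_pos ⟨by simp [hb], by simp [hb], rfl⟩, if_pos hb]
    · rw [if_neg, if_neg hb]
      rintro ⟨h1, -, -⟩
      exact hb (Fin.ext h1))
  rw [this, mul_one]

lemma sup_eq_sl (hs : 0 < s) (hpos : ∀ i, 1 ≤ p i)
    (hbal : ∀ i j : Fin s, p i ≤ p j + 1) : geSig p ⊔ sSig p = slSig p := by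
  apply le_antisymm
  · exact sup_le inf_le_left inf_le_left
  · intro x hx
    have htr : Matrix.trace x = 0 := hx
    set τ : ℂ := Matrix.trace (cMat p hpos x) with hτ
    set c : Matrix (Σ b : Fin s, Fin (p b)) (Σ b : Fin s, Fin (p b)) ℂ :=
      cMat p hpos x - (τ / (p ⟨0, hs⟩ : ℂ)) • E0 p with hc
    have hp0 : (p ⟨0, hs⟩ : ℂ) ≠ 0 := Nat.cast_ne_zero.mpr (by have := hpos ⟨0, hs⟩; omega)
    have hcomm : c ∈ commSig p := by
      have h1 : cMat p hpos x ∈ commSig p := cMat_comm hpos hbal x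
      have h2 : E0 p ∈ commSig p := E0_comm
      exact Submodule.sub_mem _ h1 (Submodule.smul_mem _ _ h2)
    have hctr : Matrix.trace c = 0 := by
      rw [hc, Matrix.trace_sub, Matrix.trace_smul, E0_trace hs]
      rw [smul_eq_mul, div_mul_cancel₀ _ hp0, hτ, sub_self]
    have hxc : x - c ∈ sSig p := by
      constructor
      · show Matrix.trace (x - c) = 0
        rw [Matrix.trace_sub, htr, hctr, sub_zero]
      · intro I J hPP
        rcases I with ⟨b, ⟨i, hi⟩⟩
        rcases J with ⟨c', ⟨j, hj⟩⟩
        simp only [PP, Fin.val_mk] at hPP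
        push_neg at hPP
        obtain ⟨hi0, hPP2⟩ := hPP
        have hizero : i = 0 := by omega
        subst hizero
        have hcval : c ⟨b, ⟨0, hi⟩⟩ ⟨c', ⟨j, hj⟩⟩ = x ⟨b, ⟨0, hi⟩⟩ ⟨c', ⟨j, hj⟩⟩ := by
          rcases Nat.eq_zero_or_pos j with rfl | hjpos
          · obtain ⟨hnlt, hn0⟩ := hPP2 rfl
            rw [hc, Matrix.sub_apply, Matrix.smul_apply, cMat, E0]
            simp only [Fin.val_mk]
            rw [if_pos ⟨le_refl 0, Or.inl (by omega)⟩, if_neg (by tauto)]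
            simp
          · rw [hc, Matrix.sub_apply, Matrix.smul_apply, cMat, E0]
            simp only [Fin.val_mk]
            rw [if_pos ⟨by omega, Or.inr (by omega)⟩, if_neg (by omega)]
            simp only [smul_zero, sub_zero, Nat.sub_zero]
        rw [Matrix.sub_apply, hcval, sub_self]
    have hcge : c ∈ geSig p := ⟨hctr, hcomm⟩
    have := Submodule.add_mem_sup hcge hxc
    rwa [add_sub_cancel] at this

end Sup

section Jordan

variable {n : ℕ}

lemma jordan_eSig (hpos : ∀ i, 1 ≤ p i) (hsum : ∑ u, p u = n)
    (I J : Σ b : Fin s, Fin (p b)) :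
    jordanOfPartition s p (ixEquiv p hsum I) (ixEquiv p hsum J) = eSig p I J := by
  rcases I with ⟨b, ⟨i, hi⟩⟩
  rcases J with ⟨c, ⟨j, hj⟩⟩
  rw [jordanOfPartition, eSig]
  have hIv : ((ixEquiv p hsum ⟨b, ⟨i, hi⟩⟩ : Fin n) : ℕ) = offN p b + i := rfl
  have hJv : ((ixEquiv p hsum ⟨c, ⟨j, hj⟩⟩ : Fin n) : ℕ) = offN p c + j := rfl
  by_cases hcond : b = c ∧ j = i + 1
  · obtain ⟨hbc, hji⟩ := hcond
    subst hbc
    subst hji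
    have hc1 : ((ixEquiv p hsum ⟨b, ⟨i + 1, hj⟩⟩ : Fin n) : ℕ)
        = ((ixEquiv p hsum ⟨b, ⟨i, hi⟩⟩ : Fin n) : ℕ) + 1 := by
      rw [hIv, hJv]
      omega
    have hc2 : ∀ t : Fin s, ((ixEquiv p hsum ⟨b, ⟨i + 1, hj⟩⟩ : Fin n) : ℕ)
        ≠ ∑ u ∈ Finset.univ.filter (fun u : Fin s => (u : ℕ) < (t : ℕ)), p u := by
      intro t
      rw [hJv]
      exact not_block_start p b (by omega) hj t
    rw [if_pos ⟨hc1, hc2⟩, if_pos ⟨rfl, rfl⟩]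
  · have hnc2 : ¬((⟨b, ⟨i, hi⟩⟩ : Σ b : Fin s, Fin (p b)).1
        = (⟨c, ⟨j, hj⟩⟩ : Σ b : Fin s, Fin (p b)).1
        ∧ (((⟨c, ⟨j, hj⟩⟩ : Σ b : Fin s, Fin (p b)).2 : ℕ))
          = ((⟨b, ⟨i, hi⟩⟩ : Σ b : Fin s, Fin (p b)).2 : ℕ) + 1) := by
      rintro ⟨h1, h2⟩
      exact hcond ⟨h1, h2⟩
    have hnc1 : ¬(((ixEquiv p hsum ⟨c, ⟨j, hj⟩⟩ : Fin n) : ℕ)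
        = ((ixEquiv p hsum ⟨b, ⟨i, hi⟩⟩ : Fin n) : ℕ) + 1
        ∧ ∀ t : Fin s, ((ixEquiv p hsum ⟨c, ⟨j, hj⟩⟩ : Fin n) : ℕ)
          ≠ ∑ u ∈ Finset.univ.filter (fun u : Fin s => (u : ℕ) < (t : ℕ)), p u) := by
      rintro ⟨h1, h2⟩
      have h1' : offN p (c : ℕ) + j = offN p (b : ℕ) + i + 1 := by
        rw [← hIv, ← hJv]
        exact h1
      have h2' : ∀ t : Fin s, offN p (c : ℕ) + j ≠ offN p (t : ℕ) := by
        intro t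
        have h3 := h2 t
        rw [hJv] at h3
        exact h3
      rcases Nat.eq_zero_or_pos j with rfl | hjpos
      · exact h2' c (by omega)
      · obtain ⟨j', rfl⟩ : ∃ j', j = j' + 1 := ⟨j - 1, by omega⟩
        have hkey : (⟨c, ⟨j', by omega⟩⟩ : Σ b : Fin s, Fin (p b)) = ⟨b, ⟨i, hi⟩⟩ := by
          apply toGlobal_inj p hsum
          apply Fin.ext
          show offN p (c : ℕ) + j' = offN p (b : ℕ) + i
          omega
        obtain ⟨hcb, hval⟩ := Sigma.mk.inj_iff.mp hkey
        subst hcb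
        rw [heq_eq_eq] at hval
        have : j' = i := congrArg Fin.val hval
        exact hcond ⟨rfl, by omega⟩
    rw [if_neg hnc1, if_neg hnc2]

end Jordan

end Conormal

open Conormal in
theorem balanced_partition_orbit_is_conormal
    (n s : ℕ) (hn : 2 ≤ n) (p : Fin s → ℕ)
    (hmono : ∀ i j : Fin s, i ≤ j → p j ≤ p i)
    (hpos : ∀ i, 1 ≤ p i)
    (hsum : ∑ u, p u = n)
    (hbal : ∀ i j : Fin s, p i ≤ p j + 1)
    (e : Matrix (Fin n) (Fin n) ℂ) (hE : e = jordanOfPartition s p)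
    (ge : Submodule ℂ (Matrix (Fin n) (Fin n) ℂ))
    (hge : ge = slSubmodule n ⊓ commSubmodule e) :
    ∃ 𝔰 : Submodule ℂ (Matrix (Fin n) (Fin n) ℂ),
      𝔰 ≤ slSubmodule n ∧
      (∀ x ∈ 𝔰, ∀ y ∈ 𝔰, x * y - y * x ∈ 𝔰) ∧
      ge ⊓ 𝔰 = ⊥ ∧ ge ⊔ 𝔰 = slSubmodule n := by
  subst hE
  subst hge
  have hs : 0 < s := by
    rcases Nat.eq_zero_or_pos s with rfl | hs
    · exfalso
      simp only [Finset.univ_eq_empty, Finset.sum_empty] at hsum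
      omega
    · exact hs
  set ι := ixEquiv p hsum with hι
  set f := Matrix.reindexAlgEquiv ℂ ℂ ι with hf
  set fl := f.toLinearEquiv.toLinearMap with hfl
  have hflapp : ∀ y, fl y = f y := fun _ => rfl
  -- trace is preserved
  have htr : ∀ y, Matrix.trace (f y) = Matrix.trace y := by
    intro y
    have h1 : Matrix.trace (f y) = ∑ i : Fin n, y (ι.symm i) (ι.symm i) := rfl
    rw [h1, Equiv.sum_comp ι.symm (fun I => y I I)]
    rfl
  -- sl transports
  have hsl : slSubmodule n = Submodule.map fl (slSig p) := by
    ext x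
    constructor
    · intro hx
      have hx' : Matrix.trace x = 0 := hx
      refine Submodule.mem_map.mpr ⟨f.symm x, ?_, ?_⟩
      · show Matrix.trace (f.symm x) = 0
        rw [← htr (f.symm x), AlgEquiv.apply_symm_apply]
        exact hx'
      · show f (f.symm x) = x
        exact AlgEquiv.apply_symm_apply f x
    · rintro ⟨y, hy, rfl⟩
      show Matrix.trace (f y) = 0
      rw [htr]
      exact hy
  -- jordan matrix transports
  have hE2 : jordanOfPartition s p (n := n) = f (eSig p) := by
    funext i j
    have h1 : f (eSig p) i j = eSig p (ι.symm i) (ι.symm j) := rfl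
    rw [h1]
    conv_lhs => rw [show i = ι (ι.symm i) from (Equiv.apply_symm_apply ι i).symm,
      show j = ι (ι.symm j) from (Equiv.apply_symm_apply ι j).symm]
    exact jordan_eSig hpos hsum _ _
  -- commutant transports
  have hmemcm : ∀ (E x : Matrix (Fin n) (Fin n) ℂ),
      x ∈ commSubmodule E ↔ E * x = x * E := by
    intro E x
    rw [commSubmodule, LinearMap.mem_ker, LinearMap.sub_apply, LinearMap.mulLeft_apply,
      LinearMap.mulRight_apply, sub_eq_zero]
  have hcm : commSubmodule (jordanOfPartition s p (n := n)) = Submodule.map fl (commSig p) := by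
    rw [hE2]
    ext x
    rw [hmemcm]
    constructor
    · intro hx
      refine Submodule.mem_map.mpr ⟨f.symm x, ?_, AlgEquiv.apply_symm_apply f x⟩
      show f.symm x * eSig p = eSig p * f.symm x
      have := congrArg f.symm hx
      rw [map_mul, map_mul, AlgEquiv.symm_apply_apply] at this
      exact this.symm
    · rintro ⟨y, hy, rfl⟩
      have hy' : y * eSig p = eSig p * y := hy
      show f (eSig p) * fl y = fl y * f (eSig p)
      rw [hflapp, ← map_mul, ← map_mul, hy']
  have hinj : Function.Injective fl := f.toLinearEquiv.injective
  have hge2 : slSubmodule n ⊓ commSubmodule (jordanOfPartition s p (n := n))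
      = Submodule.map fl (geSig p) := by
    rw [hsl, hcm, geSig, Submodule.map_inf _ hinj]
  refine ⟨Submodule.map fl (sSig p), ?_, ?_, ?_, ?_⟩
  · rw [hsl]
    exact Submodule.map_mono inf_le_left
  · intro x hx y hy
    obtain ⟨a, ha, rfl⟩ := Submodule.mem_map.mp hx
    obtain ⟨b, hb, rfl⟩ := Submodule.mem_map.mp hy
    refine Submodule.mem_map.mpr ⟨a * b - b * a, ?_, ?_⟩
    · constructor
      · show Matrix.trace (a * b - b * a) = 0
        rw [Matrix.trace_sub, Matrix.trace_mul_comm, sub_self]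
      · exact Submodule.sub_mem (zeroSet p)
          (zeroSet_mul hmono ha.2 hb.2) (zeroSet_mul hmono hb.2 ha.2)
    · rw [hflapp, hflapp, hflapp, map_sub, map_mul, map_mul]
  · rw [hge2, ← Submodule.map_inf _ hinj]
    have hbot : geSig p ⊓ sSig p = ⊥ := by
      rw [eq_bot_iff]
      rintro x ⟨⟨hx1, hx2⟩, -, hx4⟩
      have := inf_eq_zero hs hpos hx1 (by exact hx2) hx4
      simp [this]
    rw [hbot, Submodule.map_bot]
  · rw [hge2, ← Submodule.map_sup, sup_eq_sl hs hpos hbal, hsl]
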